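/- Let 0 < λ₁ ≤ λ₂ ≤ ⋯ be a nondecreasing sequence tending to infinity whose counting function satisfies #{m ≥ 1 : λ_m ≤ x} ≤ C x^{d/2} for all x > 0, where d ≥ 1. Then there is a constant C' (depending only on C, d, λ₁) such that for all t ∈ (0, 1], Σ_{m≥1} e^{−λ_m t} λ_m^{−d/2} ≤ C' (1 + log(1/t)). -/

import Mathlib

open MeasureTheory Set Filter

set_option maxHeartbeats 1000000 in
/-- borderline logarithmic heat-trace-type estimate under a Weyl-law
counting bound.  The sequence `lam 0 ≤ lam 1 ≤ ⋯` plays the role of `λ₁ ≤ λ₂ ≤ ⋯`. -/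
theorem stmt9 (d : ℕ) (hd : 1 ≤ d) (C : ℝ) (lam : ℕ → ℝ)
    (hpos : 0 < lam 0) (hmono : Monotone lam)
    (htend : Filter.Tendsto lam Filter.atTop Filter.atTop)
    (hcount : ∀ x > (0 : ℝ), (({m : ℕ | lam m ≤ x}.ncard : ℝ)) ≤ C * x ^ ((d : ℝ) / 2)) :
    ∃ C' > (0 : ℝ), ∀ t ∈ Set.Ioc (0 : ℝ) 1,
      ∑' m : ℕ, Real.exp (-(lam m) * t) * lam m ^ (-(d : ℝ) / 2) ≤
        C' * (1 + Real.log (1 / t)) := by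
  have hlam : ∀ m, 0 < lam m := fun m => lt_of_lt_of_le hpos (hmono (Nat.zero_le m))
  -- the counting sets are finite
  have hfin : ∀ x : ℝ, {m : ℕ | lam m ≤ x}.Finite := by
    intro x
    have h : ∀ᶠ m in atTop, x < lam m := htend.eventually_gt_atTop x
    rw [← Nat.cofinite_eq_atTop, Filter.eventually_cofinite] at h
    exact h.subset fun m hm => not_lt.2 hm
  -- key Weyl bound per index
  have key : ∀ m : ℕ, ((m : ℝ) + 1) ≤ C * lam m ^ ((d : ℝ) / 2) := by
    intro m
    have hsub : (Set.Iic m) ⊆ {k : ℕ | lam k ≤ lam m} := fun k hk => hmono hk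
    have h1 : m + 1 ≤ {k : ℕ | lam k ≤ lam m}.ncard := by
      have h2 := Set.ncard_le_ncard hsub (hfin (lam m))
      rwa [← Finset.coe_Iic, Set.ncard_coe_finset, Nat.card_Iic] at h2
    calc ((m : ℝ) + 1) ≤ ({k : ℕ | lam k ≤ lam m}.ncard : ℝ) := by exact_mod_cast h1
      _ ≤ C * lam m ^ ((d : ℝ) / 2) := hcount _ (hlam m)
  have hC : 0 < C := by
    have h0 := key 0
    have h1 : (0 : ℝ) < lam 0 ^ ((d : ℝ) / 2) := Real.rpow_pos_of_pos hpos _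
    nlinarith
  set A : ℝ := (d.factorial : ℝ) * C ^ 3 with hA
  have hA0 : 0 < A := by
    have := d.factorial_pos
    have : (0 : ℝ) < (d.factorial : ℝ) := by exact_mod_cast this
    positivity
  have hlog2 : (0 : ℝ) ≤ Real.log 2 := Real.log_nonneg (by norm_num)
  refine ⟨C * (1 + Real.log 2 + d) + A, by positivity, ?_⟩
  intro t ht
  obtain ⟨ht0, ht1⟩ := ht
  have hL : 0 ≤ Real.log (1 / t) := Real.log_nonneg (by rw [le_div_iff₀ ht0]; linarith)
  set f : ℕ → ℝ := fun m => Real.exp (-(lam m) * t) * lam m ^ (-(d : ℝ) / 2) with hfdef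
  set P : ℕ → ℝ := fun m => lam m ^ ((d : ℝ) / 2) with hPdef
  have hPpos : ∀ m, 0 < P m := fun m => Real.rpow_pos_of_pos (hlam m) _
  have hfeq : ∀ m, f m = Real.exp (-(lam m * t)) * (P m)⁻¹ := by
    intro m
    simp only [hfdef, hPdef, neg_div, Real.rpow_neg (hlam m).le, neg_mul]
  have hf0 : ∀ m, 0 ≤ f m := fun m => by
    rw [hfeq]
    exact mul_nonneg (Real.exp_nonneg _) (inv_nonneg.2 (hPpos m).le)
  have hinvP : ∀ m, (P m)⁻¹ ≤ C / ((m : ℝ) + 1) := by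
    intro m
    have hPC : ((m : ℝ) + 1) / C ≤ P m := (div_le_iff₀ hC).2 (by linarith [key m])
    have h1 : (0 : ℝ) < ((m : ℝ) + 1) / C := by positivity
    calc (P m)⁻¹ ≤ (((m : ℝ) + 1) / C)⁻¹ := inv_anti₀ h1 hPC
      _ = C / ((m : ℝ) + 1) := by rw [inv_div]
  -- bound 1 : f m ≤ C / (m+1)
  have bound1 : ∀ m, f m ≤ C / ((m : ℝ) + 1) := by
    intro m
    have hexp : Real.exp (-(lam m * t)) ≤ 1 :=
      Real.exp_le_one_iff.2 (by nlinarith [hlam m])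
    calc f m = Real.exp (-(lam m * t)) * (P m)⁻¹ := hfeq m
      _ ≤ 1 * (P m)⁻¹ :=
        mul_le_mul_of_nonneg_right hexp (inv_nonneg.2 (hPpos m).le)
      _ = (P m)⁻¹ := one_mul _
      _ ≤ C / ((m : ℝ) + 1) := hinvP m
  -- bound 2 : f m ≤ A / t^d * (1/(m+1)^3)
  have bound2 : ∀ m, f m ≤ A / t ^ d * (1 / ((m : ℝ) + 1) ^ 3) := by
    intro m
    have hsq : P m ^ 2 = lam m ^ d := by
      rw [hPdef, ← Real.rpow_natCast (lam m ^ ((d : ℝ) / 2)) 2,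
        ← Real.rpow_mul (hlam m).le, ← Real.rpow_natCast (lam m) d]
      norm_num
    have hltpos : 0 < lam m * t := mul_pos (hlam m) ht0
    have hexp : Real.exp (-(lam m * t)) ≤ (d.factorial : ℝ) / (lam m * t) ^ d := by
      rw [Real.exp_neg]
      have hle : (lam m * t) ^ d / (d.factorial : ℝ) ≤ Real.exp (lam m * t) :=
        Real.pow_div_factorial_le_exp (lam m * t) hltpos.le d
      have hp : (0 : ℝ) < (lam m * t) ^ d / (d.factorial : ℝ) := by positivity
      calc (Real.exp (lam m * t))⁻¹ ≤ ((lam m * t) ^ d / (d.factorial : ℝ))⁻¹ :=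
            inv_anti₀ hp hle
        _ = (d.factorial : ℝ) / (lam m * t) ^ d := by rw [inv_div]
    have hfrac : (d.factorial : ℝ) / (lam m * t) ^ d
        = (d.factorial : ℝ) / t ^ d * (P m ^ 2)⁻¹ := by
      rw [mul_pow, ← hsq, div_mul_eq_div_div, div_right_comm, div_eq_mul_inv]
    have hP2 : (P m ^ 2)⁻¹ ≤ (C / ((m : ℝ) + 1)) ^ 2 := by
      rw [← inv_pow]
      exact pow_le_pow_left₀ (inv_nonneg.2 (hPpos m).le) (hinvP m) 2
    calc f m = Real.exp (-(lam m * t)) * (P m)⁻¹ := hfeq m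
      _ ≤ ((d.factorial : ℝ) / (lam m * t) ^ d) * (C / ((m : ℝ) + 1)) := by
          apply mul_le_mul hexp (hinvP m) (inv_nonneg.2 (hPpos m).le)
          positivity
      _ = (d.factorial : ℝ) / t ^ d * (P m ^ 2)⁻¹ * (C / ((m : ℝ) + 1)) := by
          rw [hfrac]
      _ ≤ (d.factorial : ℝ) / t ^ d * (C / ((m : ℝ) + 1)) ^ 2 * (C / ((m : ℝ) + 1)) := by
          have h1 : (0 : ℝ) ≤ (d.factorial : ℝ) / t ^ d := by positivity
          have h2 : (0 : ℝ) ≤ C / ((m : ℝ) + 1) := by positivity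
          exact mul_le_mul_of_nonneg_right (mul_le_mul_of_nonneg_left hP2 h1) h2
      _ = A / t ^ d * (1 / ((m : ℝ) + 1) ^ 3) := by
          rw [hA]
          have h3 : ((m : ℝ) + 1) ≠ 0 := by positivity
          field_simp
  -- summability
  have hsumaux : Summable (fun m : ℕ => A / t ^ d * (1 / ((m : ℝ) + 1) ^ 3)) := by
    apply Summable.mul_left
    have h1 : Summable (fun n : ℕ => 1 / (n : ℝ) ^ 3) :=
      Real.summable_one_div_nat_pow.2 (by norm_num)
    have h2 := (summable_nat_add_iff 1).2 h1
    apply h2.congr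
    intro n
    push_cast
    ring
  have hsum : Summable f := Summable.of_nonneg_of_le hf0 bound2 hsumaux
  -- split point
  set N : ℕ := ⌈(1 / t) ^ d⌉₊ with hN
  have hxt : (1 : ℝ) ≤ 1 / t := by rw [le_div_iff₀ ht0]; linarith
  have hx1 : (1 : ℝ) ≤ (1 / t) ^ d := one_le_pow₀ hxt
  have hNx : (1 / t) ^ d ≤ (N : ℝ) := Nat.le_ceil _
  have hN1 : 1 ≤ N := by exact_mod_cast hx1.trans hNx
  have hxN : (N : ℝ) ≤ (1 / t) ^ d + 1 := (Nat.ceil_lt_add_one (by positivity)).le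
  have hN0 : (0 : ℝ) < (N : ℝ) := by exact_mod_cast hN1
  -- head estimate
  have head : ∑ i ∈ Finset.range N, f i ≤ C * (1 + Real.log N) := by
    calc ∑ i ∈ Finset.range N, f i ≤ ∑ i ∈ Finset.range N, C / ((i : ℝ) + 1) :=
          Finset.sum_le_sum fun i _ => bound1 i
      _ = C * ((harmonic N : ℚ) : ℝ) := by
          have hharm : ((harmonic N : ℚ) : ℝ) = ∑ i ∈ Finset.range N, ((i : ℝ) + 1)⁻¹ := by
            simp only [harmonic, Rat.cast_sum, Rat.cast_inv, Rat.cast_natCast]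
            push_cast
            rfl
          rw [hharm, Finset.mul_sum]
          apply Finset.sum_congr rfl
          intro i _
          rw [div_eq_mul_inv]
      _ ≤ C * (1 + Real.log N) :=
          mul_le_mul_of_nonneg_left (harmonic_le_one_add_log N) hC.le
  have hlogN : Real.log N ≤ Real.log 2 + d * Real.log (1 / t) := by
    have h2 : (N : ℝ) ≤ 2 * (1 / t) ^ d := by nlinarith
    calc Real.log N ≤ Real.log (2 * (1 / t) ^ d) :=
          Real.log_le_log hN0 h2
      _ = Real.log 2 + d * Real.log (1 / t) := by
          rw [Real.log_mul (by norm_num) (by positivity), Real.log_pow]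
  -- tail estimate
  have tail : ∑' k : ℕ, f (k + N) ≤ A := by
    have htd : (0 : ℝ) < t ^ d := by positivity
    apply Real.tsum_le_of_sum_range_le (fun k => hf0 _)
    intro n
    have step : ∀ k : ℕ, f (k + N)
        ≤ A / t ^ d * (1 / ((k : ℝ) + N) - 1 / ((k : ℝ) + N + 1)) := by
      intro k
      have hM : (1 : ℝ) ≤ (k : ℝ) + N := by
        have : (1 : ℝ) ≤ (N : ℝ) := by exact_mod_cast hN1
        have hk : (0 : ℝ) ≤ (k : ℝ) := Nat.cast_nonneg k
        linarith
      have h1 : 1 / (((k : ℝ) + N) + 1) ^ 3 ≤ 1 / (((k : ℝ) + N) * (((k : ℝ) + N) + 1)) := by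
        apply one_div_le_one_div_of_le (by nlinarith)
        nlinarith [sq_nonneg ((k : ℝ) + N), sq_nonneg ((k : ℝ) + N + 1), hM]
      have h2 : 1 / (((k : ℝ) + N) * (((k : ℝ) + N) + 1))
          = 1 / ((k : ℝ) + N) - 1 / ((k : ℝ) + N + 1) := by
        have ha : ((k : ℝ) + N) ≠ 0 := by linarith
        have hb : ((k : ℝ) + N + 1) ≠ 0 := by linarith
        field_simp
        try ring
      calc f (k + N) ≤ A / t ^ d * (1 / (((k + N : ℕ) : ℝ) + 1) ^ 3) := bound2 (k + N)
        _ = A / t ^ d * (1 / (((k : ℝ) + N) + 1) ^ 3) := by push_cast; ring_nf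
        _ ≤ A / t ^ d * (1 / ((k : ℝ) + N) - 1 / ((k : ℝ) + N + 1)) := by
            rw [← h2]
            exact mul_le_mul_of_nonneg_left h1 (div_nonneg hA0.le htd.le)
    calc ∑ k ∈ Finset.range n, f (k + N)
        ≤ ∑ k ∈ Finset.range n, A / t ^ d * (1 / ((k : ℝ) + N) - 1 / ((k : ℝ) + N + 1)) :=
          Finset.sum_le_sum fun k _ => step k
      _ = A / t ^ d * ∑ k ∈ Finset.range n,
            ((fun j : ℕ => 1 / ((j : ℝ) + N)) k - (fun j : ℕ => 1 / ((j : ℝ) + N)) (k + 1)) := by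
          rw [← Finset.mul_sum]
          congr 1
          apply Finset.sum_congr rfl
          intro k _
          push_cast
          ring
      _ = A / t ^ d * ((fun j : ℕ => 1 / ((j : ℝ) + N)) 0 - (fun j : ℕ => 1 / ((j : ℝ) + N)) n) := by
          rw [Finset.sum_range_sub' (fun j : ℕ => 1 / ((j : ℝ) + N)) n]
      _ ≤ A / t ^ d * (1 / (N : ℝ)) := by
          apply mul_le_mul_of_nonneg_left _ (div_nonneg hA0.le htd.le)
          simp only []
          have hn0 : (0 : ℝ) < (n : ℝ) + N := by positivity
          have h4 : 0 ≤ 1 / ((n : ℝ) + N) := by positivity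
          push_cast
          rw [zero_add]
          linarith
      _ ≤ A := by
          have h1 : 1 / (N : ℝ) ≤ t ^ d := by
            rw [div_le_iff₀ hN0]
            have ht' : (1 / t) ^ d * t ^ d = 1 := by
              rw [← mul_pow]
              field_simp
              exact one_pow d
            nlinarith [hNx, htd]
          calc A / t ^ d * (1 / (N : ℝ)) ≤ A / t ^ d * t ^ d := by
                apply mul_le_mul_of_nonneg_left h1 (div_nonneg hA0.le htd.le)
            _ = A := by field_simp
  -- combine
  rw [← Summable.sum_add_tsum_nat_add N hsum]
  have hfinal : ∑ i ∈ Finset.range N, f i + ∑' k : ℕ, f (k + N)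
      ≤ C * (1 + (Real.log 2 + d * Real.log (1 / t))) + A := by
    have := head.trans (mul_le_mul_of_nonneg_left (by linarith [hlogN] : 1 + Real.log N ≤ 1 + (Real.log 2 + d * Real.log (1 / t))) hC.le)
    linarith [tail]
  refine hfinal.trans ?_
  have hd1 : (1 : ℝ) ≤ (d : ℝ) := by exact_mod_cast hd
  nlinarith [hL, hC, hA0, hlog2, mul_nonneg hA0.le hL, mul_nonneg (mul_nonneg hC.le hlog2) hL, mul_nonneg hC.le hL]
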